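/- Let ψ = ∃x_1∀y_1⋯∃x_n∀y_n φ be a quantified Boolean formula where φ is a 3-CNF over the variables x_1,…,x_n,y_1,…,y_n. Let y_0, z_0,…,z_n, t_1,…,t_n be new variables, let X' = {(z_0,y_0)} ∪ {(x_i,t_i) : 1 ≤ i ≤ n} ∪ {(z_i,y_i) : 1 ≤ i ≤ n}, and let φ' = φ ∧ ⋀_{i=1}^n ((y_{i−1} ∨ t_i ∨ z_i) ∧ (¬y_{i−1} ∨ ¬t_i ∨ z_i) ∧ (¬y_{i−1} ∨ t_i ∨ ¬z_i) ∧ (y_{i−1} ∨ ¬t_i ∨ ¬z_i)). Then Satisfier has a winning strategy in the 3-QBF game on ψ if and only if Satisfier has a winning strategy in the Paired SAT game on (φ', X'). -/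

import Mathlib

variable {α : Type*} [DecidableEq α]

lemma card_sdiff_pair_lt {U : Finset α} {x y : α} (hx : x ∈ U) :
    (U \ {x, y}).card < U.card :=
  lt_of_le_of_lt
    (Finset.card_le_card (by
      intro a ha
      simp only [Finset.mem_sdiff, Finset.mem_insert, Finset.mem_singleton,
        Finset.mem_erase] at ha ⊢
      tauto))
    (Finset.card_erase_lt_of_mem hx)

/-- A literal over the variable type `ν`: a variable together with a polarity. -/
abbrev Lit (ν : Type*) := ν × Bool

/-- A clause with exactly three literals. -/
abbrev Clause3 (ν : Type*) := Lit ν × Lit ν × Lit ν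

/-- A 3-CNF formula: a list of three-literal clauses. -/
abbrev CNF3 (ν : Type*) := List (Clause3 ν)

def evalLit {ν : Type*} (v : ν → Bool) (l : Lit ν) : Prop := v l.1 = l.2

def evalClause {ν : Type*} (v : ν → Bool) (c : Clause3 ν) : Prop :=
  evalLit v c.1 ∨ evalLit v c.2.1 ∨ evalLit v c.2.2

def evalCNF {ν : Type*} (v : ν → Bool) (φ : CNF3 ν) : Prop := ∀ c ∈ φ, evalClause v c

/-- Paired SAT game on the pair-index type `I` with winning condition `φ` (a predicate on the
final assignments `x, y` of the first and second members of the pairs): Satisfier has a winning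
strategy from the position in which `R` is the set of indices not yet chosen and `x, y` record
the values assigned so far.  At each turn Satisfier picks an unchosen index `i` and a value for
`x i`, then Falsifier picks a value for `y i`; when all indices are exhausted Satisfier wins
iff `φ x y` holds. -/
def PSSatWins {I : Type*} [DecidableEq I] (φ : (I → Bool) → (I → Bool) → Prop)
    (R : Finset I) (x y : I → Bool) : Prop :=
  if _h : R.Nonempty then
    ∃ i, ∃ _hi : i ∈ R, ∃ b : Bool, ∀ c : Bool,
      PSSatWins φ (R.erase i) (Function.update x i b) (Function.update y i c)
  else φ x y
termination_by R.card
decreasing_by all_goals exact Finset.card_erase_lt_of_mem (by assumption)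

/-- Satisfier has a winning strategy in the 3-QBF game on
`∃ x₀ ∀ y₀ ∃ x₁ ∀ y₁ ⋯ ∃ x_{n-1} ∀ y_{n-1}, φ`, where in `φ` the variable `xᵢ` is `Sum.inl i`
and `yᵢ` is `Sum.inr i`: Satisfier has, for each `i`, a choice of value for `xᵢ` depending on
the values of `y_j` for `j < i`, such that whatever values Falsifier picks for the `yᵢ`'s, the
resulting assignment satisfies `φ`. -/
def QBFSatWins (n : ℕ) (φ : CNF3 (Fin n ⊕ Fin n)) : Prop :=
  ∃ f : (i : Fin n) → (Fin i.1 → Bool) → Bool,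
    ∀ y : Fin n → Bool,
      evalCNF (Sum.elim (fun i => f i (fun j => y ⟨j.1, j.2.trans i.2⟩)) y) φ

/-- The index type of the pairs of the Paired SAT instance: `none` indexes the pair
`(z₀, y₀)`, `some (Sum.inl i)` the pair `(xᵢ, tᵢ)`, and `some (Sum.inr i)` the pair
`(zᵢ₊₁, yᵢ₊₁)` (for `i : Fin n`, in `0`-based indexing). -/
abbrev PairIdx (n : ℕ) := Option (Fin n ⊕ Fin n)

/-- Given the Falsifier assignment `Y` of the Paired SAT instance, `prevY n Y i` is the value
of the variable `y` preceding the `i`-th XOR clause: `y₀ = Y none` when `i = 0` and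
`y_i = Y (some (Sum.inr (i - 1)))` otherwise. -/
def prevY (n : ℕ) (Y : PairIdx n → Bool) (i : Fin n) : Bool :=
  if i.1 = 0 then Y none
  else Y (some (Sum.inr ⟨i.1 - 1, lt_of_le_of_lt (Nat.sub_le _ _) i.2⟩))

/-- The three-variable XOR `a ⊕ b ⊕ c`, written as the conjunction of its four clauses. -/
def xor3 (a b c : Bool) : Prop :=
  (a = true ∨ b = true ∨ c = true) ∧ (¬a = true ∨ ¬b = true ∨ c = true) ∧
    (¬a = true ∨ b = true ∨ ¬c = true) ∧ (a = true ∨ ¬b = true ∨ ¬c = true)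

/-- The winning condition `φ'` of the Paired SAT instance associated with the 3-QBF formula
`ψ = ∃x₁∀y₁⋯∃xₙ∀yₙ φ`:  `X` assigns the first components `z₀, xᵢ, zᵢ` of the pairs and `Y`
the second components `y₀, tᵢ, yᵢ`; the condition is that `φ` is satisfied by the values of
the `xᵢ`'s and `yᵢ`'s and that each XOR clause `y_{i-1} ⊕ t_i ⊕ z_i` holds. -/
def pairedFormula (n : ℕ) (φ : CNF3 (Fin n ⊕ Fin n)) (X Y : PairIdx n → Bool) : Prop :=
  evalCNF (Sum.elim (fun i => X (some (Sum.inl i))) (fun i => Y (some (Sum.inr i)))) φ ∧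
    ∀ i : Fin n, xor3 (prevY n Y i) (Y (some (Sum.inl i))) (X (some (Sum.inr i)))


/-! ### Auxiliary machinery for the proof -/

section Aux

lemma xor3_mk (a b : Bool) : xor3 a b (!(a.xor b)) := by
  cases a <;> cases b <;> simp [xor3]

lemma not_xor3_mid (a c : Bool) : ¬ xor3 a (a.xor c) c := by
  cases a <;> cases c <;> simp [xor3]

lemma not_xor3_left (b c : Bool) : ¬ xor3 (b.xor c) b c := by
  cases b <;> cases c <;> simp [xor3]

/-- The index of the pair holding the `y`-variable preceding the `i`-th XOR clause. -/
def prevIdx (n : ℕ) (i : Fin n) : PairIdx n :=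
  if i.1 = 0 then none
  else some (Sum.inr ⟨i.1 - 1, lt_of_le_of_lt (Nat.sub_le _ _) i.2⟩)

lemma prevY_eq (n : ℕ) (Y : PairIdx n → Bool) (i : Fin n) :
    prevY n Y i = Y (prevIdx n i) := by
  unfold prevY prevIdx
  split <;> rfl

lemma prevIdx_ne_inl (n : ℕ) (i j : Fin n) : prevIdx n i ≠ some (Sum.inl j) := by
  unfold prevIdx; split <;> simp

lemma prevIdx_ne_inr_self (n : ℕ) (i : Fin n) : prevIdx n i ≠ some (Sum.inr i) := by
  unfold prevIdx
  split
  · simp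
  · intro h
    have := Sum.inr.inj (Option.some.inj h)
    have := congrArg Fin.val this
    simp at this
    omega

/-- One-player sequenced version of the paired game: Satisfier must play the indices of `L`
in order. -/
def SeqWin {I : Type*} [DecidableEq I] (φ : (I → Bool) → (I → Bool) → Prop) :
    List I → (I → Bool) → (I → Bool) → Prop
  | [], x, y => φ x y
  | i :: L, x, y => ∃ b : Bool, ∀ c : Bool,
      SeqWin φ L (Function.update x i b) (Function.update y i c)

lemma seqWin_ps {I : Type*} [DecidableEq I] (φ : (I → Bool) → (I → Bool) → Prop) :
    ∀ (L : List I) (x y : I → Bool), L.Nodup → SeqWin φ L x y →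
      PSSatWins φ L.toFinset x y := by
  intro L
  induction L with
  | nil =>
    intro x y _ h
    rw [PSSatWins, dif_neg (by simp)]
    exact h
  | cons i L ih =>
    intro x y hnd h
    obtain ⟨b, hb⟩ := h
    have hiL : i ∉ L.toFinset := by simp [List.nodup_cons.mp hnd |>.1]
    rw [PSSatWins, dif_pos (by simp)]
    refine ⟨i, by simp, b, fun c => ?_⟩
    have : (i :: L).toFinset.erase i = L.toFinset := by
      rw [List.toFinset_cons, Finset.erase_insert hiL]
    rw [this]
    exact ih _ _ (List.nodup_cons.mp hnd).2 (hb c)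

/-- The canonical order in which Satisfier plays the pairs, from round `k` on. -/
def ord (n : ℕ) (k : ℕ) : List (PairIdx n) :=
  if h : k < n then
    some (Sum.inl ⟨k, h⟩) :: some (Sum.inr ⟨k, h⟩) :: ord n (k+1)
  else []
termination_by n - k
decreasing_by omega

lemma mem_ord (n : ℕ) : ∀ (k : ℕ) (i : Fin n), k ≤ i.1 →
    some (Sum.inl i) ∈ ord n k ∧ some (Sum.inr i) ∈ ord n k := by
  intro k i hk
  have h : k < n := lt_of_le_of_lt hk i.2
  rw [ord, dif_pos h]
  by_cases hik : i.1 = k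
  · have : i = ⟨k, h⟩ := Fin.ext hik
    subst this
    simp
  · have := mem_ord n (k+1) i (by omega)
    constructor
    · exact List.mem_cons_of_mem _ (List.mem_cons_of_mem _ this.1)
    · exact List.mem_cons_of_mem _ (List.mem_cons_of_mem _ this.2)
termination_by k => n - k
decreasing_by omega

lemma ord_mem_ge (n : ℕ) : ∀ (k : ℕ) (a : PairIdx n), a ∈ ord n k →
    ∃ i : Fin n, k ≤ i.1 ∧ (a = some (Sum.inl i) ∨ a = some (Sum.inr i)) := by
  intro k a ha
  by_cases h : k < n
  · rw [ord, dif_pos h] at ha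
    rcases ha with _ | ⟨_, ha⟩
    · exact ⟨⟨k, h⟩, le_refl _, Or.inl rfl⟩
    · rcases ha with _ | ⟨_, ha⟩
      · exact ⟨⟨k, h⟩, le_refl _, Or.inr rfl⟩
      · obtain ⟨i, hi, hai⟩ := ord_mem_ge n (k+1) a ha
        exact ⟨i, by omega, hai⟩
  · rw [ord, dif_neg h] at ha
    exact absurd ha List.not_mem_nil
termination_by k => n - k
decreasing_by omega

lemma ord_nodup (n : ℕ) : ∀ (k : ℕ), (ord n k).Nodup := by
  intro k
  by_cases h : k < n
  · rw [ord, dif_pos h]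
    refine List.nodup_cons.mpr ⟨?_, List.nodup_cons.mpr ⟨?_, ord_nodup n (k+1)⟩⟩
    · intro hmem
      rcases hmem with _ | ⟨_, hmem⟩
      · obtain ⟨i, hi, hai⟩ := ord_mem_ge n (k+1) _ hmem
        rcases hai with h' | h'
        · have hk : (⟨k, h⟩ : Fin n) = i := by simpa using h'
          exact absurd (congrArg Fin.val hk) (by simp; omega)
        · simp at h'
    · intro hmem
      obtain ⟨i, hi, hai⟩ := ord_mem_ge n (k+1) _ hmem
      rcases hai with h' | h'
      · simp at h'
      · have hk : (⟨k, h⟩ : Fin n) = i := by simpa using h'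
        exact absurd (congrArg Fin.val hk) (by simp; omega)
  · rw [ord, dif_neg h]; exact List.nodup_nil
termination_by k => n - k
decreasing_by omega

lemma ord_toFinset (n : ℕ) :
    (List.toFinset (none :: ord n 0)) = (Finset.univ : Finset (PairIdx n)) := by
  apply Finset.eq_univ_iff_forall.mpr
  intro a
  rw [List.mem_toFinset]
  match a with
  | none => exact List.mem_cons_self
  | some (Sum.inl i) => exact List.mem_cons_of_mem _ (mem_ord n 0 i (Nat.zero_le _)).1
  | some (Sum.inr i) => exact List.mem_cons_of_mem _ (mem_ord n 0 i (Nat.zero_le _)).2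

lemma full_nodup (n : ℕ) : (none :: ord n 0 : List (PairIdx n)).Nodup := by
  refine List.nodup_cons.mpr ⟨?_, ord_nodup n 0⟩
  intro hmem
  obtain ⟨i, _, hai⟩ := ord_mem_ge n 0 _ hmem
  rcases hai with h | h <;> simp at h

/-- Forward direction invariant: from round `k` on, playing in the canonical order wins. -/
lemma fwd (n : ℕ) (φ : CNF3 (Fin n ⊕ Fin n)) (f : (i : Fin n) → (Fin i.1 → Bool) → Bool)
    (hf : ∀ y : Fin n → Bool,
      evalCNF (Sum.elim (fun i => f i (fun j => y ⟨j.1, j.2.trans i.2⟩)) y) φ) :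
    ∀ (k : ℕ) (x y : PairIdx n → Bool),
      (∀ j : Fin n, j.1 < k → x (some (Sum.inl j)) =
        f j (fun m => y (some (Sum.inr ⟨m.1, m.2.trans j.2⟩)))) →
      (∀ j : Fin n, j.1 < k →
        xor3 (prevY n y j) (y (some (Sum.inl j))) (x (some (Sum.inr j)))) →
      SeqWin (pairedFormula n φ) (ord n k) x y := by
  intro k x y Hx Hxor
  by_cases h : k < n
  · rw [ord, dif_pos h]
    refine ⟨f ⟨k, h⟩ (fun m => y (some (Sum.inr ⟨m.1, m.2.trans h⟩))), fun c => ?_⟩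
    set x1 := Function.update x (some (Sum.inl ⟨k, h⟩))
      (f ⟨k, h⟩ (fun m => y (some (Sum.inr ⟨m.1, m.2.trans h⟩)))) with hx1
    set y1 := Function.update y (some (Sum.inl ⟨k, h⟩)) c with hy1
    refine ⟨!((prevY n y1 ⟨k, h⟩).xor c), fun c' => ?_⟩
    apply fwd n φ f hf (k+1)
    · intro j hj
      by_cases hjk : j.1 = k
      · obtain rfl : j = ⟨k, h⟩ := Fin.ext hjk
        have e1 : (some (Sum.inl (⟨k, h⟩ : Fin n)) : PairIdx n) ≠ some (Sum.inr (⟨k, h⟩ : Fin n)) := by simp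
        rw [Function.update_of_ne e1, hx1, Function.update_self]
        congr 1
        funext m
        have e2 : (some (Sum.inr (⟨m.1, m.2.trans h⟩ : Fin n)) : PairIdx n) ≠ some (Sum.inr (⟨k, h⟩ : Fin n)) := by
          simp only [ne_eq, Option.some.injEq, Sum.inr.injEq]
          intro hc
          have := congrArg Fin.val hc
          simp at this
          omega
        have e3 : (some (Sum.inr (⟨m.1, m.2.trans h⟩ : Fin n)) : PairIdx n) ≠ some (Sum.inl (⟨k, h⟩ : Fin n)) := by simp
        rw [Function.update_of_ne e2, hy1, Function.update_of_ne e3]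
      · have hjk' : j.1 < k := by omega
        have e1 : (some (Sum.inl j) : PairIdx n) ≠ some (Sum.inr (⟨k, h⟩ : Fin n)) := by simp
        have e2 : (some (Sum.inl j) : PairIdx n) ≠ some (Sum.inl (⟨k, h⟩ : Fin n)) := by
          simp only [ne_eq, Option.some.injEq, Sum.inl.injEq]
          intro hc; exact hjk (congrArg Fin.val hc)
        rw [Function.update_of_ne e1, hx1, Function.update_of_ne e2]
        rw [Hx j hjk']
        congr 1
        funext m
        have e3 : (some (Sum.inr (⟨m.1, m.2.trans j.2⟩ : Fin n)) : PairIdx n) ≠ some (Sum.inr (⟨k, h⟩ : Fin n)) := by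
          simp only [ne_eq, Option.some.injEq, Sum.inr.injEq]
          intro hc
          have := congrArg Fin.val hc
          simp at this
          omega
        have e4 : (some (Sum.inr (⟨m.1, m.2.trans j.2⟩ : Fin n)) : PairIdx n) ≠ some (Sum.inl (⟨k, h⟩ : Fin n)) := by simp
        rw [Function.update_of_ne e3, hy1, Function.update_of_ne e4]
    · intro j hj
      -- the updated assignments
      by_cases hjk : j.1 = k
      · obtain rfl : j = ⟨k, h⟩ := Fin.ext hjk
        have ep : ∀ (Yv : Bool), prevY n (Function.update y1 (some (Sum.inr ⟨k, h⟩)) c') ⟨k, h⟩ = prevY n y1 ⟨k, h⟩ := by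
          intro Yv
          rw [prevY_eq, prevY_eq]
          rw [Function.update_of_ne]
          intro hc
          exact absurd hc (by
            unfold prevIdx
            split
            · simp
            · simp only [ne_eq, Option.some.injEq, Sum.inr.injEq]
              intro hc2
              have := congrArg Fin.val hc2
              simp at this
              omega)
        rw [ep true]
        have ey : Function.update y1 (some (Sum.inr ⟨k, h⟩)) c' (some (Sum.inl ⟨k, h⟩)) = c := by
          rw [Function.update_of_ne (by simp), hy1, Function.update_self]
        rw [ey]
        have ex : Function.update x1 (some (Sum.inr ⟨k, h⟩)) (!((prevY n y1 ⟨k, h⟩).xor c)) (some (Sum.inr ⟨k, h⟩)) = !((prevY n y1 ⟨k, h⟩).xor c) := Function.update_self _ _ _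
        rw [ex]
        exact xor3_mk _ _
      · have hjk' : j.1 < k := by omega
        have hx' : Function.update x1 (some (Sum.inr ⟨k, h⟩)) (!((prevY n y1 ⟨k, h⟩).xor c)) (some (Sum.inr j)) = x (some (Sum.inr j)) := by
          rw [Function.update_of_ne (by
            simp only [ne_eq, Option.some.injEq, Sum.inr.injEq]
            intro hc; exact hjk (congrArg Fin.val hc)), hx1,
            Function.update_of_ne (by simp)]
        have hyl : Function.update y1 (some (Sum.inr ⟨k, h⟩)) c' (some (Sum.inl j)) = y (some (Sum.inl j)) := by
          rw [Function.update_of_ne (by simp), hy1,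
            Function.update_of_ne (by
              simp only [ne_eq, Option.some.injEq, Sum.inl.injEq]
              intro hc; exact hjk (congrArg Fin.val hc))]
        have hyp : prevY n (Function.update y1 (some (Sum.inr ⟨k, h⟩)) c') j = prevY n y j := by
          rw [prevY_eq, prevY_eq]
          rw [Function.update_of_ne, hy1, Function.update_of_ne]
          · exact prevIdx_ne_inl n j ⟨k, h⟩
          · unfold prevIdx
            split
            · simp
            · simp only [ne_eq, Option.some.injEq, Sum.inr.injEq]
              intro hc2
              have := congrArg Fin.val hc2
              simp at this
              omega
        rw [hx', hyl, hyp]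
        exact Hxor j hjk'
  · rw [ord, dif_neg h]
    unfold SeqWin
    constructor
    · have hn : ∀ i : Fin n, i.1 < k := fun i => lt_of_lt_of_le i.2 (by omega)
      have ex : (fun i : Fin n => x (some (Sum.inl i))) =
          (fun i : Fin n => f i (fun j => (fun m : Fin n => y (some (Sum.inr m))) ⟨j.1, j.2.trans i.2⟩)) := by
        funext i
        exact Hx i (hn i)
      show evalCNF (Sum.elim (fun i => x (some (Sum.inl i))) (fun i => y (some (Sum.inr i)))) φ
      rw [ex]
      exact hf (fun m => y (some (Sum.inr m)))
    · intro i
      exact Hxor i (lt_of_lt_of_le i.2 (by omega))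
termination_by k => n - k
decreasing_by omega

end Aux


section QWsec

/-- The recursive winning predicate for the 3-QBF game from round `k` on. -/
def QW (n : ℕ) (φ : CNF3 (Fin n ⊕ Fin n)) (k : ℕ) (x y : Fin n → Bool) : Prop :=
  if h : k < n then
    ∃ b, ∀ c, QW n φ (k+1) (Function.update x ⟨k,h⟩ b) (Function.update y ⟨k,h⟩ c)
  else evalCNF (Sum.elim x y) φ
termination_by n - k
decreasing_by omega

lemma QW_succ (n : ℕ) (φ : CNF3 (Fin n ⊕ Fin n)) {k : ℕ} (h : k < n) (x y : Fin n → Bool) :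
    QW n φ k x y ↔
      ∃ b, ∀ c, QW n φ (k+1) (Function.update x ⟨k,h⟩ b) (Function.update y ⟨k,h⟩ c) := by
  rw [QW, dif_pos h]

lemma QW_last (n : ℕ) (φ : CNF3 (Fin n ⊕ Fin n)) {k : ℕ} (h : ¬ k < n) (x y : Fin n → Bool) :
    QW n φ k x y ↔ evalCNF (Sum.elim x y) φ := by
  rw [QW, dif_neg h]

lemma QW_congr (n : ℕ) (φ : CNF3 (Fin n ⊕ Fin n)) (k : ℕ) (x y x' y' : Fin n → Bool)
    (hag : ∀ j : Fin n, j.1 < k → x j = x' j ∧ y j = y' j) (hq : QW n φ k x y) :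
    QW n φ k x' y' := by
  by_cases h : k < n
  · rw [QW_succ n φ h] at hq ⊢
    obtain ⟨b, hb⟩ := hq
    refine ⟨b, fun c => ?_⟩
    refine QW_congr n φ (k+1) _ _ _ _ ?_ (hb c)
    intro j hj
    by_cases hjk : j = ⟨k, h⟩
    · subst hjk; simp
    · simp only [Function.update_of_ne hjk]
      have : j.1 ≠ k := fun hc => hjk (Fin.ext hc)
      exact hag j (by omega)
  · rw [QW_last n φ h] at hq ⊢
    have hx : x = x' := funext fun j => (hag j (lt_of_lt_of_le j.2 (by omega))).1
    have hy : y = y' := funext fun j => (hag j (lt_of_lt_of_le j.2 (by omega))).2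
    rw [← hx, ← hy]; exact hq
termination_by n - k
decreasing_by omega

/-- Satisfier's canonical choice at round `k` (via choice), when she is winning. -/
lemma chooseB_ex (n : ℕ) (φ : CNF3 (Fin n ⊕ Fin n)) {k : ℕ} (h : k < n)
    (x y : Fin n → Bool) : ∃ b : Bool, QW n φ k x y → ∀ c,
      QW n φ (k+1) (Function.update x ⟨k,h⟩ b) (Function.update y ⟨k,h⟩ c) := by
  by_cases hq : QW n φ k x y
  · obtain ⟨b, hb⟩ := (QW_succ n φ h x y).mp hq
    exact ⟨b, fun _ => hb⟩
  · exact ⟨false, fun hq' => absurd hq' hq⟩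

noncomputable def chooseB (n : ℕ) (φ : CNF3 (Fin n ⊕ Fin n)) {k : ℕ} (h : k < n)
    (x y : Fin n → Bool) : Bool :=
  Classical.choose (chooseB_ex n φ h x y)

lemma chooseB_spec (n : ℕ) (φ : CNF3 (Fin n ⊕ Fin n)) {k : ℕ} (h : k < n)
    (x y : Fin n → Bool) (hq : QW n φ k x y) (c : Bool) :
    QW n φ (k+1) (Function.update x ⟨k,h⟩ (chooseB n φ h x y))
      (Function.update y ⟨k,h⟩ c) :=
  Classical.choose_spec (chooseB_ex n φ h x y) hq c

/-- The play of the QBF game in which Satisfier uses `chooseB` and Falsifier plays `y`. -/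
noncomputable def play (n : ℕ) (φ : CNF3 (Fin n ⊕ Fin n)) (y : Fin n → Bool) :
    ℕ → ((Fin n → Bool) × (Fin n → Bool))
  | 0 => (fun _ => false, fun _ => false)
  | k+1 =>
    let p := play n φ y k
    if h : k < n then
      (Function.update p.1 ⟨k,h⟩ (chooseB n φ h p.1 p.2),
       Function.update p.2 ⟨k,h⟩ (y ⟨k,h⟩))
    else p

lemma play_succ_pos (n : ℕ) (φ : CNF3 (Fin n ⊕ Fin n)) (y : Fin n → Bool) {k : ℕ}
    (h : k < n) : play n φ y (k+1) =
      (Function.update (play n φ y k).1 ⟨k,h⟩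
          (chooseB n φ h (play n φ y k).1 (play n φ y k).2),
       Function.update (play n φ y k).2 ⟨k,h⟩ (y ⟨k,h⟩)) := by
  simp only [play, dif_pos h]

lemma play_succ_neg (n : ℕ) (φ : CNF3 (Fin n ⊕ Fin n)) (y : Fin n → Bool) {k : ℕ}
    (h : ¬ k < n) : play n φ y (k+1) = play n φ y k := by
  simp only [play, dif_neg h]

lemma play_snd (n : ℕ) (φ : CNF3 (Fin n ⊕ Fin n)) (y : Fin n → Bool) :
    ∀ (k : ℕ) (j : Fin n), j.1 < k → (play n φ y k).2 j = y j := by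
  intro k
  induction k with
  | zero => intro j hj; omega
  | succ k ih =>
    intro j hj
    by_cases h : k < n
    · rw [play_succ_pos n φ y h]
      by_cases hjk : j = ⟨k, h⟩
      · subst hjk; simp
      · show Function.update (play n φ y k).2 ⟨k,h⟩ (y ⟨k,h⟩) j = y j
        rw [Function.update_of_ne hjk]
        have : j.1 ≠ k := fun hc => hjk (Fin.ext hc)
        exact ih j (by omega)
    · rw [play_succ_neg n φ y h]
      exact ih j (lt_of_lt_of_le j.2 (by omega))

lemma play_fst_stable (n : ℕ) (φ : CNF3 (Fin n ⊕ Fin n)) (y : Fin n → Bool)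
    (k : ℕ) (j : Fin n) (hj : j.1 < k) :
    (play n φ y (k+1)).1 j = (play n φ y k).1 j := by
  by_cases h : k < n
  · rw [play_succ_pos n φ y h]
    show Function.update (play n φ y k).1 ⟨k,h⟩ _ j = _
    rw [Function.update_of_ne (fun hc => by
      have h2 : j.1 = k := congrArg Fin.val hc
      omega)]
  · rw [play_succ_neg n φ y h]

lemma play_fst_ge (n : ℕ) (φ : CNF3 (Fin n ⊕ Fin n)) (y : Fin n → Bool)
    (j : Fin n) : ∀ (m : ℕ), j.1 < m → (play n φ y m).1 j = (play n φ y (j.1+1)).1 j := by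
  intro m
  induction m with
  | zero => intro hm; omega
  | succ m ih =>
    intro hm
    by_cases hx : j.1 < m
    · rw [play_fst_stable n φ y m j hx]
      exact ih hx
    · have hmj : m = j.1 := by omega
      subst hmj
      rfl

lemma play_congr (n : ℕ) (φ : CNF3 (Fin n ⊕ Fin n)) (y y' : Fin n → Bool) :
    ∀ (k : ℕ), (∀ j : Fin n, j.1 < k → y j = y' j) → play n φ y k = play n φ y' k := by
  intro k
  induction k with
  | zero => intro _; rfl
  | succ k ih =>
    intro hag
    have hp : play n φ y k = play n φ y' k := ih (fun j hj => hag j (by omega))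
    by_cases h : k < n
    · rw [play_succ_pos n φ y h, play_succ_pos n φ y' h, hp,
        hag ⟨k, h⟩ (by exact lt_of_lt_of_le (Nat.lt_succ_self k) (le_refl _))]
    · rw [play_succ_neg n φ y h, play_succ_neg n φ y' h, hp]

lemma play_QW (n : ℕ) (φ : CNF3 (Fin n ⊕ Fin n)) (x0 y0 : Fin n → Bool)
    (hq : QW n φ 0 x0 y0) (y : Fin n → Bool) :
    ∀ (k : ℕ), k ≤ n → QW n φ k (play n φ y k).1 (play n φ y k).2 := by
  intro k
  induction k with
  | zero =>
    intro _
    exact QW_congr n φ 0 x0 y0 _ _ (fun j hj => by omega) hq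
  | succ k ih =>
    intro hk
    have h : k < n := by omega
    have hqk := ih (by omega)
    rw [play_succ_pos n φ y h]
    exact chooseB_spec n φ h _ _ hqk (y ⟨k, h⟩)

lemma QW_to_QBF (n : ℕ) (φ : CNF3 (Fin n ⊕ Fin n)) (x0 y0 : Fin n → Bool)
    (hq : QW n φ 0 x0 y0) : QBFSatWins n φ := by
  classical
  refine ⟨fun i yp => (play n φ
    (fun m => if h : m.1 < i.1 then yp ⟨m.1, h⟩ else false) (i.1+1)).1 i, fun y => ?_⟩
  have key : ∀ i : Fin n,
      (play n φ (fun m => if h : m.1 < i.1 then y ⟨m.1, h.trans i.2⟩ else false) (i.1+1)).1 i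
        = (play n φ y n).1 i := by
    intro i
    set yext : Fin n → Bool := fun m => if h : m.1 < i.1 then y ⟨m.1, h.trans i.2⟩ else false
      with hyext
    have hagree : ∀ j : Fin n, j.1 < i.1 → yext j = y j := by
      intro j hj
      rw [hyext]
      simp only [dif_pos hj]
    have hpe : play n φ yext i.1 = play n φ y i.1 := play_congr n φ yext y i.1 hagree
    have hi : i.1 < n := i.2
    have h1 : (play n φ yext (i.1+1)).1 i = (play n φ y (i.1+1)).1 i := by
      rw [play_succ_pos n φ yext hi, play_succ_pos n φ y hi, hpe]
    rw [h1]
    exact (play_fst_ge n φ y i n hi).symm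
  have hn := play_QW n φ x0 y0 hq y n le_rfl
  rw [QW_last n φ (by omega)] at hn
  have hy2 : (play n φ y n).2 = y := funext fun j => play_snd n φ y n j j.2
  rw [hy2] at hn
  convert hn using 2
  funext i
  exact key i

end QWsec


section Falsifier

/-- A position of the Paired SAT game that Falsifier has already won: some XOR clause is
doomed, since its `z`-variable has been fixed while Falsifier still gets to answer one of the
two `y`-variables in it (or the clause is already violated). -/
def Bad (n : ℕ) (R : Finset (PairIdx n)) (x y : PairIdx n → Bool) : Prop :=
  ∃ j : Fin n, some (Sum.inr j) ∉ R ∧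
    (some (Sum.inl j) ∈ R ∨ prevIdx n j ∈ R ∨
      ¬ xor3 (y (prevIdx n j)) (y (some (Sum.inl j))) (x (some (Sum.inr j))))

theorem notPS_bad (n : ℕ) (φ : CNF3 (Fin n ⊕ Fin n)) (R : Finset (PairIdx n))
    (x y : PairIdx n → Bool) (hb : Bad n R x y) :
    ¬ PSSatWins (pairedFormula n φ) R x y := by
  obtain ⟨j, hjr, hdis⟩ := hb
  rw [PSSatWins]
  by_cases hR : R.Nonempty
  · rw [dif_pos hR]
    rintro ⟨i, hi, b, hall⟩
    have hine : i ≠ some (Sum.inr j) := fun hc => hjr (hc ▸ hi)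
    by_cases h1 : i = some (Sum.inl j)
    · refine notPS_bad n φ _ _ _ ?_
        (hall ((y (prevIdx n j)).xor (x (some (Sum.inr j)))))
      refine ⟨j, fun hc => hjr (Finset.mem_of_mem_erase hc), ?_⟩
      by_cases h2 : prevIdx n j ∈ R
      · exact Or.inr (Or.inl (Finset.mem_erase.mpr ⟨h1 ▸ prevIdx_ne_inl n j j, h2⟩))
      · right; right
        subst h1
        rw [Function.update_of_ne (prevIdx_ne_inl n j j),
          Function.update_self,
          Function.update_of_ne (fun hc : (some (Sum.inr j) : PairIdx n) = _ => by simp at hc)]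
        exact not_xor3_mid _ _
    · by_cases h2 : i = prevIdx n j
      · refine notPS_bad n φ _ _ _ ?_
          (hall ((y (some (Sum.inl j))).xor (x (some (Sum.inr j)))))
        refine ⟨j, fun hc => hjr (Finset.mem_of_mem_erase hc), ?_⟩
        by_cases h3 : some (Sum.inl j) ∈ R
        · exact Or.inl (Finset.mem_erase.mpr ⟨fun hc => h1 hc.symm, h3⟩)
        · right; right
          subst h2
          rw [Function.update_self,
            Function.update_of_ne (fun hc : (some (Sum.inl j) : PairIdx n) = _ =>
              prevIdx_ne_inl n j j hc.symm),
            Function.update_of_ne (fun hc : (some (Sum.inr j) : PairIdx n) = _ =>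
              prevIdx_ne_inr_self n j hc.symm)]
          exact not_xor3_left _ _
      · refine notPS_bad n φ _ _ _ ?_ (hall false)
        refine ⟨j, fun hc => hjr (Finset.mem_of_mem_erase hc), ?_⟩
        rcases hdis with h3 | h3 | h3
        · exact Or.inl (Finset.mem_erase.mpr ⟨fun hc => h1 hc.symm, h3⟩)
        · exact Or.inr (Or.inl (Finset.mem_erase.mpr ⟨fun hc => h2 hc.symm, h3⟩))
        · right; right
          rw [Function.update_of_ne (fun hc => h2 hc.symm),
            Function.update_of_ne (fun hc => h1 hc.symm),
            Function.update_of_ne (fun hc => hine hc.symm)]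
          exact h3
  · rw [dif_neg hR]
    rintro ⟨_, hxor⟩
    have hre : R = ∅ := Finset.not_nonempty_iff_eq_empty.mp hR
    subst hre
    rcases hdis with h3 | h3 | h3
    · exact absurd h3 (Finset.notMem_empty _)
    · exact absurd h3 (Finset.notMem_empty _)
    · have := hxor j
      rw [prevY_eq] at this
      exact h3 this
termination_by R.card
decreasing_by all_goals exact Finset.card_erase_lt_of_mem hi

theorem notPS_inv (n : ℕ) (φ : CNF3 (Fin n ⊕ Fin n)) (R : Finset (PairIdx n))
    (x y : PairIdx n → Bool) (k : ℕ) (hk : k ≤ n)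
    (hR : ∀ m : Fin n, some (Sum.inr m) ∈ R ↔ k ≤ m.1)
    (hL : ∀ m : Fin n, m.1 < k → some (Sum.inl m) ∉ R)
    (hQ : ¬ QW n φ k (fun j => x (some (Sum.inl j))) (fun j => y (some (Sum.inr j)))) :
    ¬ PSSatWins (pairedFormula n φ) R x y := by
  rw [PSSatWins]
  by_cases hRn : R.Nonempty
  · rw [dif_pos hRn]
    rintro ⟨i, hi, b, hall⟩
    match i with
    | none =>
      refine notPS_inv n φ _ _ _ k hk ?_ ?_ ?_ (hall false)
      · intro m
        rw [Finset.mem_erase]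
        simp only [ne_eq, reduceCtorEq, not_false_eq_true, true_and]
        exact hR m
      · intro m hm hc
        exact hL m hm (Finset.mem_of_mem_erase hc)
      · intro hc
        refine hQ (QW_congr n φ k _ _ _ _ ?_ hc)
        intro j _
        constructor
        · exact (Function.update_of_ne (by simp) _ _)
        · exact (Function.update_of_ne (by simp) _ _)
    | some (Sum.inl m) =>
      have hmk : k ≤ m.1 := by
        by_contra hc
        exact hL m (by omega) hi
      refine notPS_inv n φ _ _ _ k hk ?_ ?_ ?_ (hall false)
      · intro m'
        rw [Finset.mem_erase]
        simp only [ne_eq, Option.some.injEq, reduceCtorEq, not_false_eq_true, true_and]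
        exact hR m'
      · intro m' hm' hc
        exact hL m' hm' (Finset.mem_of_mem_erase hc)
      · intro hc
        refine hQ (QW_congr n φ k _ _ _ _ ?_ hc)
        intro j hj
        constructor
        · refine (Function.update_of_ne ?_ _ _)
          simp only [ne_eq, Option.some.injEq, Sum.inl.injEq]
          intro hcc
          have := congrArg Fin.val hcc
          omega
        · exact (Function.update_of_ne (by simp) _ _)
    | some (Sum.inr m) =>
      have hmk : k ≤ m.1 := (hR m).mp hi
      by_cases hpun : some (Sum.inl m) ∈ R ∨ prevIdx n m ∈ R
      · -- punish: the position becomes Bad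
        refine notPS_bad n φ _ _ _ ?_ (hall false)
        refine ⟨m, by simp, ?_⟩
        rcases hpun with h3 | h3
        · exact Or.inl (Finset.mem_erase.mpr ⟨by simp, h3⟩)
        · exact Or.inr (Or.inl (Finset.mem_erase.mpr ⟨prevIdx_ne_inr_self n m, h3⟩))
      · push_neg at hpun
        obtain ⟨hinl, hprev⟩ := hpun
        -- here necessarily m.1 = k
        have hmk' : m.1 = k := by
          by_contra hc
          have hklt : k < m.1 := by omega
          have hm0 : m.1 ≠ 0 := by omega
          have : prevIdx n m ∈ R := by
            unfold prevIdx
            rw [if_neg hm0]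
            exact (hR _).mpr (by simp; omega)
          exact hprev this
        have hkn : k < n := by omega
        -- use hQ to get Falsifier's answer
        rw [QW_succ n φ hkn] at hQ
        push_neg at hQ
        obtain ⟨c, hc⟩ := hQ (x (some (Sum.inl m)))
        refine notPS_inv n φ _ _ _ (k+1) (by omega) ?_ ?_ ?_ (hall c)
        · intro m'
          rw [Finset.mem_erase]
          simp only [ne_eq, Option.some.injEq, Sum.inr.injEq]
          constructor
          · rintro ⟨h1, h2⟩
            have := (hR m').mp h2
            rcases Nat.lt_or_ge k.succ m'.1.succ with hlt | hge
            · omega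
            · exfalso
              have : m'.1 = k := by omega
              exact h1 (Fin.ext (by omega))
          · intro h1
            refine ⟨fun hcc => ?_, (hR m').mpr (by omega)⟩
            have := congrArg Fin.val hcc
            omega
        · intro m' hm' hc2
          by_cases hmm : m'.1 < k
          · exact hL m' hmm (Finset.mem_of_mem_erase hc2)
          · have : m'.1 = k := by omega
            have : m' = m := Fin.ext (by omega)
            subst this
            exact hinl (Finset.mem_of_mem_erase hc2)
        · intro hc2
          apply hc
          refine QW_congr n φ (k+1) _ _ _ _ ?_ hc2
          intro j hj
          constructor
          · by_cases hjm : j = m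
            · subst hjm
              rw [Function.update_of_ne (by simp)]
              have : (⟨k, hkn⟩ : Fin n) = j := by apply Fin.ext; simp only [Fin.val_mk]; omega
              rw [this, Function.update_self]
            · have hjk2 : j.1 ≠ k := fun hcc => hjm (Fin.ext (by omega))
              rw [Function.update_of_ne (by
                simp only [ne_eq, Option.some.injEq, reduceCtorEq, not_false_eq_true]),
                Function.update_of_ne (fun hcc => hjk2 (congrArg Fin.val hcc))]
          · by_cases hjm : j = m
            · subst hjm
              rw [Function.update_self]
              have : (⟨k, hkn⟩ : Fin n) = j := by apply Fin.ext; simp only [Fin.val_mk]; omega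
              rw [this, Function.update_self]
            · have hjk2 : j.1 ≠ k := fun hcc => hjm (Fin.ext (by omega))
              rw [Function.update_of_ne (by
                simp only [ne_eq, Option.some.injEq, Sum.inr.injEq]
                exact fun hcc => hjm hcc),
                Function.update_of_ne (fun hcc => hjk2 (congrArg Fin.val hcc))]
  · rw [dif_neg hRn]
    rintro ⟨hphi, _⟩
    have hkn : ¬ k < n := by
      intro hkn
      exact hRn ⟨some (Sum.inr ⟨k, hkn⟩), (hR ⟨k, hkn⟩).mpr (le_refl _)⟩
    rw [QW_last n φ hkn] at hQ
    exact hQ hphi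
termination_by R.card
decreasing_by all_goals exact Finset.card_erase_lt_of_mem hi

end Falsifier

/-- Satisfier wins the 3-QBF game on `ψ = ∃x₁∀y₁⋯∃xₙ∀yₙ φ` if and only if Satisfier wins the
Paired SAT game on `(φ', X')`, where `X'` consists of the pairs `(z₀, y₀)`, `(xᵢ, tᵢ)` and
`(zᵢ, yᵢ)` and `φ' = φ ∧ ⋀ᵢ (y_{i-1} ⊕ t_i ⊕ z_i)`. -/

theorem qbf_iff_pairedSAT (n : ℕ) (φ : CNF3 (Fin n ⊕ Fin n)) :
    QBFSatWins n φ ↔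
      PSSatWins (pairedFormula n φ) Finset.univ (fun _ => false) (fun _ => false) := by
  constructor
  · rintro ⟨f, hf⟩
    have hsw : SeqWin (pairedFormula n φ) (none :: ord n 0)
        (fun _ => false) (fun _ => false) := by
      refine ⟨false, fun c => ?_⟩
      exact fwd n φ f hf 0 _ _ (fun j hj => absurd hj (by omega))
        (fun j hj => absurd hj (by omega))
    have := seqWin_ps (pairedFormula n φ) _ _ _ (full_nodup n) hsw
    rwa [ord_toFinset n] at this
  · intro h
    by_contra hq
    refine notPS_inv n φ Finset.univ _ _ 0 (Nat.zero_le n) (by simp)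
      (fun m hm => absurd hm (by omega)) ?_ h
    intro hc
    exact hq (QW_to_QBF n φ _ _ hc)
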